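/- arXiv:1001.2496 — 4 statements merged into one kernel-verified Lean document; each statement's English description precedes it below -/
import Mathlib

section
/- Every root of the polynomial p_n(z) = Σ_{k=0}^n (n choose k)^2 z^k is a simple root (has multiplicity one). -/
open Polynomial

noncomputable def pnPoly (n : ℕ) : Polynomial ℂ :=
  ∑ k ∈ Finset.range (n + 1), Polynomial.C ((n.choose k : ℂ) ^ 2) * Polynomial.X ^ k

lemma pnPoly_coeff (n k : ℕ) : (pnPoly n).coeff k = (n.choose k : ℂ) ^ 2 := by
  rw [pnPoly, Polynomial.finset_sum_coeff]
  simp only [Polynomial.coeff_C_mul, Polynomial.coeff_X_pow]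
  rcases lt_or_ge k (n+1) with h | h
  · rw [Finset.sum_eq_single k]
    · simp
    · intro b _ hb; simp [Ne.symm hb]
    · intro hk; exact absurd (Finset.mem_range.mpr h) hk
  · rw [Finset.sum_eq_zero, Nat.choose_eq_zero_of_lt (by omega)]
    · simp
    · intro b hb; simp at hb; have : ¬ (k = b) := by omega
      simp [this]

lemma key_id (n j : ℕ) :
    ((j:ℂ)+1)^2 * (n.choose (j+1) : ℂ)^2 = ((n:ℂ) - j)^2 * (n.choose j : ℂ)^2 := by
  rcases le_or_gt j n with h | h
  · have h1 : ((n.choose (j+1) : ℂ)) * ((j:ℂ)+1) = (n.choose j : ℂ) * ((n:ℂ) - j) := by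
      have h0 := Nat.choose_succ_right_eq n j
      have h0' : ((n.choose (j+1) * (j+1) : ℕ) : ℂ) = ((n.choose j * (n - j) : ℕ) : ℂ) := by
        rw [h0]
      push_cast [Nat.cast_sub h] at h0'
      linear_combination h0'
    linear_combination (((j:ℂ)+1) * (n.choose (j+1) : ℂ) + ((n:ℂ)-(j:ℂ)) * (n.choose j : ℂ)) * h1
  · rw [Nat.choose_eq_zero_of_lt h, Nat.choose_eq_zero_of_lt (by omega)]
    simp

lemma pn_ode (n : ℕ) :
    X * (1 - X) * ((pnPoly n).derivative.derivative)
      + (1 + C (2*(n:ℂ)-1) * X) * (pnPoly n).derivative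
      = C ((n:ℂ)^2) * pnPoly n := by
  have expand : X * (1 - X) * ((pnPoly n).derivative.derivative)
      + (1 + C (2*(n:ℂ)-1) * X) * (pnPoly n).derivative
      = X * ((pnPoly n).derivative.derivative)
        - X * (X * ((pnPoly n).derivative.derivative))
        + (pnPoly n).derivative + C (2*(n:ℂ)-1) * (X * (pnPoly n).derivative) := by ring
  rw [expand]
  ext k
  simp only [coeff_add, coeff_sub, coeff_C_mul]
  rcases k with _ | _ | k
  · simp only [Polynomial.mul_coeff_zero, coeff_X_zero, zero_mul, coeff_derivative,
      pnPoly_coeff]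
    push_cast
    have h0 := key_id n 0
    push_cast at h0
    linear_combination h0
  · rw [Polynomial.coeff_X_mul, Polynomial.coeff_X_mul]
    rw [Polynomial.coeff_X_mul]
    simp only [Polynomial.mul_coeff_zero, coeff_X_zero, zero_mul, coeff_derivative, pnPoly_coeff]
    have h1 := key_id n 1
    push_cast at h1 ⊢
    linear_combination h1
  · rw [show k + 1 + 1 = (k+1) + 1 from rfl, Polynomial.coeff_X_mul, Polynomial.coeff_X_mul,
      Polynomial.coeff_X_mul, Polynomial.coeff_X_mul]
    simp only [coeff_derivative, pnPoly_coeff]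
    have h2 := key_id n (k+2)
    push_cast at h2 ⊢
    linear_combination h2

theorem pn_roots_simple (n : ℕ) (hn : 1 ≤ n) (a : ℂ) (ha : (pnPoly n).IsRoot a) :
    Polynomial.rootMultiplicity a (pnPoly n) = 1 := by
  set q := pnPoly n with hq
  have hq0 : q ≠ 0 := by
    intro h
    have := pnPoly_coeff n 0
    rw [← hq, h] at this
    simp at this
  have hm1 : 0 < rootMultiplicity a q := (rootMultiplicity_pos hq0).mpr ha
  by_contra hne1
  have hm2 : 2 ≤ rootMultiplicity a q := by omega
  set m := rootMultiplicity a q with hm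
  -- derivative facts
  have hd1 : rootMultiplicity a q.derivative = m - 1 :=
    derivative_rootMultiplicity_of_root ha
  have hq'0 : q.derivative ≠ 0 := by
    intro h
    rw [h, rootMultiplicity_zero] at hd1
    omega
  have hq'root : q.derivative.IsRoot a :=
    (rootMultiplicity_pos hq'0).mp (by omega)
  have hd2 : rootMultiplicity a q.derivative.derivative = m - 2 := by
    rw [derivative_rootMultiplicity_of_root hq'root, hd1]
    omega
  have hq''0 : q.derivative.derivative ≠ 0 := by
    intro h
    have hc := eq_C_of_derivative_eq_zero h
    have : q.derivative.coeff 0 = 0 := by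
      have := hq'root
      rw [IsRoot, hc] at this
      simpa using this
    rw [this, map_zero] at hc
    exact hq'0 hc
  -- a is not 0 or 1
  have ha0 : a ≠ 0 := by
    intro h
    rw [h] at ha
    have : q.coeff 0 = 0 := by rwa [Polynomial.coeff_zero_eq_eval_zero]
    rw [pnPoly_coeff n 0] at this
    simp at this
  have ha1 : a ≠ 1 := by
    intro h
    have heval : q.eval 1 = ((∑ k ∈ Finset.range (n+1), (n.choose k)^2 : ℕ) : ℂ) := by
      rw [hq, pnPoly, Polynomial.eval_finset_sum]
      push_cast
      simp
    rw [h] at ha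
    have : q.eval 1 = 0 := ha
    rw [heval] at this
    have hpos : 0 < ∑ k ∈ Finset.range (n+1), (n.choose k)^2 := by
      apply Finset.sum_pos
      · intro i hi
        simp only [Finset.mem_range] at hi
        have : 0 < n.choose i := Nat.choose_pos (by omega)
        positivity
      · exact ⟨0, Finset.mem_range.mpr (by omega)⟩
    rw [Nat.cast_eq_zero] at this
    omega
  -- divisibility
  have hdq : (X - C a) ^ (m - 1) ∣ q :=
    dvd_trans (pow_dvd_pow _ (by omega)) (pow_rootMultiplicity_dvd q a)
  have hdq' : (X - C a) ^ (m - 1) ∣ q.derivative := by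
    rw [← hd1]; exact pow_rootMultiplicity_dvd _ a
  have heq : X * (1 - X) * q.derivative.derivative
      = C ((n:ℂ)^2) * q - (1 + C (2*(n:ℂ)-1) * X) * q.derivative := by
    linear_combination pn_ode n
  have hdvd : (X - C a) ^ (m - 1) ∣ X * (1 - X) * q.derivative.derivative := by
    rw [heq]
    exact dvd_sub (hdq.mul_left _) (hdq'.mul_left _)
  have h1X : (1 - X : Polynomial ℂ) ≠ 0 := by
    intro h
    have := congrArg (fun p => Polynomial.coeff p 1) h
    simp [Polynomial.coeff_one] at this
  have hprodne : X * (1 - X) * q.derivative.derivative ≠ 0 :=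
    mul_ne_zero (mul_ne_zero X_ne_zero h1X) hq''0
  have hle : m - 1 ≤ rootMultiplicity a (X * (1 - X) * q.derivative.derivative) :=
    (le_rootMultiplicity_iff hprodne).mpr hdvd
  rw [rootMultiplicity_mul hprodne,
      rootMultiplicity_mul (mul_ne_zero X_ne_zero h1X)] at hle
  have hX : rootMultiplicity a (X : Polynomial ℂ) = 0 :=
    rootMultiplicity_eq_zero (by simpa [IsRoot] using ha0)
  have h1Xm : rootMultiplicity a (1 - X : Polynomial ℂ) = 0 :=
    rootMultiplicity_eq_zero (by simp [IsRoot, sub_eq_zero]; exact fun h => ha1 h.symm)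
  rw [hX, h1Xm, hd2] at hle
  omega
end

section
/- Let a_1,…,a_n be the roots of p_n(z) = Σ_{k=0}^n (n choose k)^2 z^k. Then for each i: Σ_{j ≠ i} (a_i + a_j)/(n²(a_i - a_j)) + (1 + a_i)/(n(1 - a_i)) = 0. -/
open Polynomial Finset

noncomputable def Pp (n : ℕ) : Polynomial ℂ :=
  ∑ k ∈ Finset.range (n+1), Polynomial.C ((n.choose k : ℂ)^2) * Polynomial.X ^ k

lemma Pp_coeff (n m : ℕ) : (Pp n).coeff m = (n.choose m : ℂ)^2 := by
  rw [Pp, Polynomial.finset_sum_coeff]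
  simp only [Polynomial.coeff_C_mul, Polynomial.coeff_X_pow, mul_ite, mul_one, mul_zero]
  rw [Finset.sum_ite_eq (Finset.range (n+1)) m]
  split
  · rfl
  · next h =>
    rw [Finset.mem_range, not_lt] at h
    rw [Nat.choose_eq_zero_of_lt (by omega)]
    norm_num

lemma keyc (n m : ℕ) : ((m:ℂ)+1)^2 * ((n.choose (m+1) : ℂ))^2
    = ((n:ℂ)-(m:ℂ))^2 * ((n.choose m : ℂ))^2 := by
  rcases lt_trichotomy n m with h | rfl | h
  · rw [Nat.choose_eq_zero_of_lt (by omega), Nat.choose_eq_zero_of_lt (by omega)]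
    norm_num
  · rw [Nat.choose_succ_self, sub_self]
    norm_num
  · have hc := Nat.choose_succ_right_eq n m
    have h2 : ((n.choose (m+1) : ℂ)) * ((m:ℂ)+1) = (n.choose m : ℂ) * ((n:ℂ) - m) := by
      rw [← Nat.cast_sub h.le]
      exact_mod_cast congrArg (Nat.cast : ℕ → ℂ) hc
    linear_combination (((m:ℂ)+1) * (n.choose (m+1) : ℂ) + ((n:ℂ)-m) * (n.choose m : ℂ)) * h2

lemma ode (n : ℕ) :
    Polynomial.X * (1 - Polynomial.X) * Polynomial.derivative (Polynomial.derivative (Pp n))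
      + (1 + Polynomial.C ((2*(n:ℂ)) - 1) * Polynomial.X) * Polynomial.derivative (Pp n)
      = Polynomial.C ((n:ℂ)^2) * Pp n := by
  set A := Polynomial.derivative (Polynomial.derivative (Pp n)) with hA
  set B := Polynomial.derivative (Pp n) with hB
  have expand : Polynomial.X * (1 - Polynomial.X) * A
      + (1 + Polynomial.C ((2*(n:ℂ)) - 1) * Polynomial.X) * B
      = A * Polynomial.X^1 - A * Polynomial.X^2 + B
        + Polynomial.C ((2*(n:ℂ)) - 1) * (B * Polynomial.X^1) := by ring
  rw [expand]
  ext m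
  have hBc : ∀ j, B.coeff j = (n.choose (j+1) : ℂ)^2 * ((j:ℂ)+1) := by
    intro j; rw [hB, Polynomial.coeff_derivative, Pp_coeff]
  have hAc : ∀ j, A.coeff j = (n.choose (j+2) : ℂ)^2 * ((j:ℂ)+2) * ((j:ℂ)+1) := by
    intro j
    rw [hA, Polynomial.coeff_derivative, hBc]
    push_cast; ring
  simp only [Polynomial.coeff_add, Polynomial.coeff_sub, Polynomial.coeff_C_mul,
    Polynomial.coeff_mul_X_pow', Pp_coeff]
  match m with
  | 0 =>
    norm_num [hBc]
  | 1 =>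
    simp only [if_pos (le_refl 1), if_neg (by norm_num : ¬((2:ℕ) ≤ 1)), hAc, hBc]
    have := keyc n 1
    push_cast at this ⊢
    linear_combination this
  | (k+2) =>
    have e1 : k + 2 - 1 = k + 1 := rfl
    have e2 : k + 2 - 2 = k := rfl
    simp only [if_pos (by omega : (1:ℕ) ≤ k+2), if_pos (by omega : (2:ℕ) ≤ k+2),
      e1, e2, hAc, hBc]
    have hk1 := keyc n (k+2)
    push_cast at hk1 ⊢
    linear_combination hk1

noncomputable def pn (n : ℕ) (z : ℂ) : ℂ :=
  ∑ k ∈ Finset.range (n + 1), ((n.choose k : ℂ)) ^ 2 * z ^ k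

lemma Pp_eval (n : ℕ) (z : ℂ) : (Pp n).eval z = pn n z := by
  simp [Pp, pn, Polynomial.eval_finset_sum]

lemma Pp_natDegree (n : ℕ) : (Pp n).natDegree = n := by
  apply le_antisymm
  · rw [Polynomial.natDegree_le_iff_coeff_eq_zero]
    intro m hm
    rw [Pp_coeff, Nat.choose_eq_zero_of_lt hm]
    norm_num
  · apply Polynomial.le_natDegree_of_ne_zero
    rw [Pp_coeff, Nat.choose_self]
    norm_num

lemma Pp_monic (n : ℕ) : (Pp n).Monic := by
  rw [Polynomial.Monic, Polynomial.leadingCoeff, Pp_natDegree, Pp_coeff, Nat.choose_self]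
  norm_num

lemma pn_one_ne (n : ℕ) : pn n 1 ≠ 0 := by
  have : pn n 1 = ((∑ k ∈ Finset.range (n+1), (n.choose k)^2 : ℕ) : ℂ) := by
    simp [pn]
  rw [this]
  rw [Nat.cast_ne_zero]
  intro h
  rw [Finset.sum_eq_zero_iff] at h
  have := h 0 (Finset.mem_range.mpr (by omega))
  simp at this

lemma derivative_prod_X_sub_C {ι : Type*} [DecidableEq ι] (s : Finset ι) (c : ι → ℂ) :
    Polynomial.derivative (∏ j ∈ s, (Polynomial.X - Polynomial.C (c j)))
      = ∑ j ∈ s, ∏ k ∈ s.erase j, (Polynomial.X - Polynomial.C (c k)) := by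
  rw [Finset.prod_eq_multiset_prod, Polynomial.derivative_prod, Finset.sum_eq_multiset_sum]
  apply congrArg Multiset.sum
  apply Multiset.map_congr rfl
  intro j hj
  rw [Polynomial.derivative_X_sub_C, mul_one, ← Finset.erase_val, ← Finset.prod_eq_multiset_prod]

theorem pn_force_F2i (n : ℕ) (hn : 1 ≤ n) (a : Fin n → ℂ)
    (ha : Function.Injective a) (hroot : ∀ i, pn n (a i) = 0) (i : Fin n) :
    ∑ j ∈ Finset.univ.erase i, (a i + a j) / ((n : ℂ) ^ 2 * (a i - a j))
      + (1 + a i) / ((n : ℂ) * (1 - a i)) = 0 := by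
  classical
  have hP0 : Pp n ≠ 0 := (Pp_monic n).ne_zero
  have hmem : ∀ j, a j ∈ (Pp n).roots := by
    intro j
    rw [Polynomial.mem_roots hP0]
    rw [Polynomial.IsRoot, Pp_eval]
    exact hroot j
  have hnodup : (Finset.univ.val.map a).Nodup := Finset.univ.nodup.map ha
  have hle : (Finset.univ.val.map a) ≤ (Pp n).roots := by
    rw [Multiset.le_iff_subset hnodup]
    intro x hx
    obtain ⟨j, _, rfl⟩ := Multiset.mem_map.mp hx
    exact hmem j
  have hcard : Multiset.card ((Pp n).roots) ≤ Multiset.card (Finset.univ.val.map a) := by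
    rw [Multiset.card_map]
    simpa [Pp_natDegree] using (Pp n).card_roots'
  have hroots : (Pp n).roots = Finset.univ.val.map a :=
    (Multiset.eq_of_le_of_card_le hle hcard).symm
  have hfact : Pp n = ∏ j : Fin n, (Polynomial.X - Polynomial.C (a j)) := by
    have := (IsAlgClosed.splits (Pp n)).eq_prod_roots_of_monic
      (Pp_monic n)
    rw [this, hroots, Multiset.map_map]
    rfl
  set z := a i with hzdef
  set D : ℂ := ∏ l ∈ Finset.univ.erase i, (z - a l) with hDdef
  set S2 : ℂ := ∑ k ∈ Finset.univ.erase i, ∏ l ∈ (Finset.univ.erase i).erase k, (z - a l) with hS2def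
  -- first derivative eval
  have hD1 : Polynomial.eval z (Polynomial.derivative (Pp n)) = D := by
    rw [hfact, derivative_prod_X_sub_C, Polynomial.eval_finset_sum]
    rw [Finset.sum_eq_single i]
    · rw [Polynomial.eval_prod]; simp [hDdef]
    · intro j _ hji
      rw [Polynomial.eval_prod]
      apply Finset.prod_eq_zero (Finset.mem_erase.mpr ⟨Ne.symm hji, Finset.mem_univ i⟩)
      simp [hzdef]
    · simp
  -- second derivative eval
  have hD2 : Polynomial.eval z (Polynomial.derivative (Polynomial.derivative (Pp n))) = 2 * S2 := by
    rw [hfact, derivative_prod_X_sub_C, Polynomial.derivative_sum]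
    have hrw : ∀ j : Fin n, Polynomial.derivative
        (∏ k ∈ Finset.univ.erase j, (Polynomial.X - Polynomial.C (a k)))
        = ∑ k ∈ Finset.univ.erase j, ∏ l ∈ (Finset.univ.erase j).erase k,
            (Polynomial.X - Polynomial.C (a l)) := fun j => derivative_prod_X_sub_C _ _
    simp only [hrw]
    rw [Polynomial.eval_finset_sum]
    rw [← Finset.add_sum_erase _ _ (Finset.mem_univ i)]
    have hterm1 : Polynomial.eval z (∑ k ∈ Finset.univ.erase i,
        ∏ l ∈ (Finset.univ.erase i).erase k, (Polynomial.X - Polynomial.C (a l))) = S2 := by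
      rw [Polynomial.eval_finset_sum]
      apply Finset.sum_congr rfl
      intro k _
      rw [Polynomial.eval_prod]
      simp
    have hterm2 : ∀ j ∈ Finset.univ.erase i, Polynomial.eval z (∑ k ∈ Finset.univ.erase j,
        ∏ l ∈ (Finset.univ.erase j).erase k, (Polynomial.X - Polynomial.C (a l)))
        = ∏ l ∈ (Finset.univ.erase i).erase j, (z - a l) := by
      intro j hj
      have hji : j ≠ i := (Finset.mem_erase.mp hj).1
      rw [Polynomial.eval_finset_sum]
      rw [Finset.sum_eq_single_of_mem i (Finset.mem_erase.mpr ⟨Ne.symm hji, Finset.mem_univ i⟩)]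
      · rw [Polynomial.eval_prod, Finset.erase_right_comm]
        simp
      · intro k hk hki
        rw [Polynomial.eval_prod]
        apply Finset.prod_eq_zero (i := i)
        · rw [Finset.mem_erase]
          exact ⟨Ne.symm hki, Finset.mem_erase.mpr ⟨Ne.symm hji, Finset.mem_univ i⟩⟩
        · simp [hzdef]
    rw [hterm1, Finset.sum_congr rfl hterm2]
    rw [hS2def]
    ring
  -- the ODE at z
  have hODE := congrArg (Polynomial.eval z) (ode n)
  simp only [Polynomial.eval_add, Polynomial.eval_mul, Polynomial.eval_sub, Polynomial.eval_one,
    Polynomial.eval_X, Polynomial.eval_C, hD1, hD2, Pp_eval] at hODE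
  have hz0 : pn n z = 0 := hroot i
  rw [hz0, mul_zero] at hODE
  -- nonvanishing facts
  have hnz : (n:ℂ) ≠ 0 := Nat.cast_ne_zero.mpr (by omega)
  have hz1 : (1:ℂ) - z ≠ 0 := by
    refine sub_ne_zero.mpr (fun h => ?_)
    exact pn_one_ne n (by rw [h]; exact hz0)
  have hzj : ∀ j ∈ Finset.univ.erase i, z - a j ≠ 0 := by
    intro j hj
    have hji : j ≠ i := (Finset.mem_erase.mp hj).1
    refine sub_ne_zero.mpr (fun h => hji (ha h.symm))
  have hD0 : D ≠ 0 := Finset.prod_ne_zero_iff.mpr hzj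
  have hDj : ∀ j ∈ Finset.univ.erase i,
      (z - a j) * (∏ l ∈ (Finset.univ.erase i).erase j, (z - a l)) = D := by
    intro j hj
    rw [hDdef]
    exact Finset.mul_prod_erase (Finset.univ.erase i) (fun l => z - a l) hj
  have hcarde : ((Finset.univ.erase i).card : ℂ) = (n:ℂ) - 1 := by
    rw [Finset.card_erase_of_mem (Finset.mem_univ i), Finset.card_univ, Fintype.card_fin]
    push_cast [Nat.cast_sub hn]
    ring
  have hterm : ∀ j ∈ Finset.univ.erase i, (z + a j) / ((n:ℂ)^2 * (z - a j))
      = ((z + a j) * ∏ l ∈ (Finset.univ.erase i).erase j, (z - a l)) / ((n:ℂ)^2 * D) := by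
    intro j hj
    rw [div_eq_div_iff (mul_ne_zero (pow_ne_zero 2 hnz) (hzj j hj))
      (mul_ne_zero (pow_ne_zero 2 hnz) hD0)]
    linear_combination (-(n:ℂ)^2 * (z + a j)) * (hDj j hj)
  rw [Finset.sum_congr rfl hterm, ← Finset.sum_div]
  have hU : ∑ j ∈ Finset.univ.erase i,
      (z + a j) * ∏ l ∈ (Finset.univ.erase i).erase j, (z - a l)
      = 2*z*S2 - ((n:ℂ)-1) * D := by
    have step : ∀ j ∈ Finset.univ.erase i,
        (z + a j) * ∏ l ∈ (Finset.univ.erase i).erase j, (z - a l)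
        = 2*z*(∏ l ∈ (Finset.univ.erase i).erase j, (z - a l))
          - (z - a j) * ∏ l ∈ (Finset.univ.erase i).erase j, (z - a l) := by
      intro j _; ring
    rw [Finset.sum_congr rfl step, Finset.sum_sub_distrib, ← Finset.mul_sum, ← hS2def]
    rw [Finset.sum_congr rfl hDj, Finset.sum_const, nsmul_eq_mul, hcarde]
  rw [hU]
  field_simp
  linear_combination hODE
end

section
/- For any configuration of points {p_{k,i}} (k = 1,…,N, i = 1,…,n_k, all p_{k,i} nonzero and the relevant differences nonzero), extended T-periodically by p_{k+N,i} = p_{k,i} e^T, the total force vanishes: Σ_{k=1}^N Σ_{i=1}^{n_k} F_{k,i} = 0, where F_{k,i} = Σ_{j≠i} (p_{k,i}+p_{k,j})/(n_k²(p_{k,i}-p_{k,j})) + (-1)^k ( Σ_{j=1}^{n_{k+1}} p_{k+1,j}^{(-1)^k} / (n_k n_{k+1}(p_{k+1,j}^{(-1)^k} - p_{k,i}^{(-1)^k})) - Σ_{j=1}^{n_{k-1}} p_{k,i}^{(-1)^k} / (n_k n_{k-1}(p_{k,i}^{(-1)^k} - p_{k-1,j}^{(-1)^k})) ). -/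
open Finset

/-- `pw k z` is `z^{(-1)^k}`: `z` if `k` is even, `z⁻¹` if `k` is odd. -/
noncomputable def pw (k : ℤ) (z : ℂ) : ℂ := if Even k then z else z⁻¹

/-- The force on the point `p k i`. -/
noncomputable def force (n : ℤ → ℕ) (p : ℤ → ℕ → ℂ) (k : ℤ) (i : ℕ) : ℂ :=
  (∑ j ∈ (range (n k)).erase i,
      (p k i + p k j) / ((n k : ℂ) ^ 2 * (p k i - p k j)))
  + (-1 : ℂ) ^ k *
    ((∑ j ∈ range (n (k + 1)),
        pw k (p (k + 1) j) /
          ((n k : ℂ) * (n (k + 1) : ℂ) * (pw k (p (k + 1) j) - pw k (p k i))))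
     - (∑ j ∈ range (n (k - 1)),
        pw k (p k i) /
          ((n k : ℂ) * (n (k - 1) : ℂ) * (pw k (p k i) - pw k (p (k - 1) j)))))




lemma pw_ne_zero {k : ℤ} {z : ℂ} (hz : z ≠ 0) : pw k z ≠ 0 := by
  unfold pw; split <;> simp [hz]

lemma pw_succ (k : ℤ) (z : ℂ) : pw (k + 1) z = (pw k z)⁻¹ := by
  unfold pw
  by_cases h : Even k
  · simp [h, Int.even_add_one, Int.not_even_iff_odd.2 (Even.add_one h)]
  · simp [h, Int.even_add_one.mpr h]

lemma pw_mul (k : ℤ) (z w : ℂ) : pw k (z * w) = pw k z * pw k w := by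
  unfold pw; split <;> simp [mul_inv, mul_comm]

lemma pw_per {N : ℕ} (hN : Even N) (k : ℤ) (z : ℂ) : pw (k + N) z = pw k z := by
  unfold pw
  have : Even (k + N) ↔ Even k := by
    constructor <;> intro h
    · have := h.sub (Int.even_coe_nat N |>.mpr hN); simpa using this
    · exact h.add ((Int.even_coe_nat N).mpr hN)
  simp only [this]

lemma intra_zero (m : ℕ) (q : ℕ → ℂ) :
    ∑ i ∈ range m, ∑ j ∈ (range m).erase i,
      (q i + q j) / ((m : ℂ) ^ 2 * (q i - q j)) = 0 := by
  set f : ℕ → ℕ → ℂ := fun i j => (q i + q j) / ((m : ℂ) ^ 2 * (q i - q j)) with hf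
  have hdiag : ∀ i, f i i = 0 := by intro i; simp [hf]
  have anti : ∀ i j, f i j = -f j i := by
    intro i j
    by_cases h : q i = q j
    · simp [hf, h]
    · rw [hf]
      simp only
      rw [show q j - q i = -(q i - q j) by ring, mul_neg, div_neg, add_comm]
      ring_nf
  have h1 : ∑ i ∈ range m, ∑ j ∈ (range m).erase i, f i j
      = ∑ i ∈ range m, ∑ j ∈ range m, f i j := by
    refine Finset.sum_congr rfl fun i _ => ?_
    exact Finset.sum_erase _ (hdiag i)
  rw [h1]
  have h2 : ∑ i ∈ range m, ∑ j ∈ range m, f i j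
      = -∑ i ∈ range m, ∑ j ∈ range m, f i j := by
    nth_rewrite 1 [Finset.sum_comm]
    rw [← Finset.sum_neg_distrib]
    refine Finset.sum_congr rfl fun i _ => ?_
    rw [← Finset.sum_neg_distrib]
    exact Finset.sum_congr rfl fun j _ => anti j i
  linear_combination h2 / 2

lemma key_frac (a b c : ℂ) (ha : a ≠ 0) (hb : b ≠ 0) (hab : a ≠ b) (hc : c ≠ 0) :
    a⁻¹ / (c * (a⁻¹ - b⁻¹)) = 1 / c - a / (c * (a - b)) := by
  have h1 : a - b ≠ 0 := sub_ne_zero.mpr hab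
  have h2 : a⁻¹ - b⁻¹ ≠ 0 := sub_ne_zero.mpr fun h => hab (inv_injective h)
  have hba : b - a ≠ 0 := sub_ne_zero.mpr fun h => hab h.symm
  have h3 : b * c - c * a ≠ 0 := by
    rw [show b * c - c * a = c * (b - a) by ring]
    exact mul_ne_zero hc hba
  field_simp
  ring

noncomputable def Aq (n : ℤ → ℕ) (p : ℤ → ℕ → ℂ) (k : ℤ) : ℂ :=
  ∑ i ∈ range (n k), ∑ j ∈ range (n (k + 1)),
    pw k (p (k + 1) j) /
      ((n k : ℂ) * (n (k + 1) : ℂ) * (pw k (p (k + 1) j) - pw k (p k i)))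

noncomputable def Bq (n : ℤ → ℕ) (p : ℤ → ℕ → ℂ) (k : ℤ) : ℂ :=
  ∑ i ∈ range (n k), ∑ j ∈ range (n (k - 1)),
    pw k (p k i) /
      ((n k : ℂ) * (n (k - 1) : ℂ) * (pw k (p k i) - pw k (p (k - 1) j)))

lemma Bq_succ (n : ℤ → ℕ) (p : ℤ → ℕ → ℂ)
    (hnpos : ∀ k, 0 < n k)
    (hne : ∀ k i, i < n k → p k i ≠ 0)
    (hadj : ∀ k i j, i < n k → j < n (k + 1) →
      pw k (p (k + 1) j) ≠ pw k (p k i))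
    (k : ℤ) : Bq n p (k + 1) = 1 - Aq n p k := by
  have hc : ((n (k + 1) : ℂ) * (n k : ℂ)) ≠ 0 :=
    mul_ne_zero (Nat.cast_ne_zero.mpr (hnpos (k + 1)).ne')
      (Nat.cast_ne_zero.mpr (hnpos k).ne')
  have step : Bq n p (k + 1)
      = ∑ i ∈ range (n (k + 1)), ∑ j ∈ range (n k),
          (1 / ((n (k + 1) : ℂ) * (n k : ℂ))
            - pw k (p (k + 1) i) /
              ((n (k + 1) : ℂ) * (n k : ℂ) *
                (pw k (p (k + 1) i) - pw k (p k j)))) := by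
    unfold Bq
    simp only [add_sub_cancel_right]
    refine Finset.sum_congr rfl fun i hi => Finset.sum_congr rfl fun j hj => ?_
    rw [mem_range] at hi hj
    rw [pw_succ, pw_succ]
    exact key_frac _ _ _ (pw_ne_zero (hne (k + 1) i hi))
      (pw_ne_zero (hne k j hj)) (hadj k j i hj hi) hc
  rw [step]
  have split : ∀ i ∈ range (n (k + 1)),
      ∑ j ∈ range (n k),
        (1 / ((n (k + 1) : ℂ) * (n k : ℂ))
          - pw k (p (k + 1) i) /
            ((n (k + 1) : ℂ) * (n k : ℂ) *
              (pw k (p (k + 1) i) - pw k (p k j))))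
      = (∑ _j ∈ range (n k), 1 / ((n (k + 1) : ℂ) * (n k : ℂ)))
        - ∑ j ∈ range (n k),
            pw k (p (k + 1) i) /
              ((n (k + 1) : ℂ) * (n k : ℂ) *
                (pw k (p (k + 1) i) - pw k (p k j))) :=
    fun i _ => Finset.sum_sub_distrib _ _
  rw [Finset.sum_congr rfl split, Finset.sum_sub_distrib]
  have hone : ∑ _i ∈ range (n (k + 1)), ∑ _j ∈ range (n k),
      (1 : ℂ) / ((n (k + 1) : ℂ) * (n k : ℂ)) = 1 := by
    rw [Finset.sum_const, Finset.sum_const, card_range, card_range,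
      nsmul_eq_mul, nsmul_eq_mul]
    field_simp
    exact div_self hc
  rw [hone]
  congr 1
  unfold Aq
  rw [Finset.sum_comm]
  refine Finset.sum_congr rfl fun i _ => Finset.sum_congr rfl fun j _ => ?_
  ring_nf

lemma Bq_per {N : ℕ} (hN : Even N) (n : ℤ → ℕ) (hnper : ∀ k, n (k + N) = n k)
    (T : ℂ) (p : ℤ → ℕ → ℂ)
    (hper : ∀ k i, p (k + N) i = p k i * Complex.exp T)
    (k : ℤ) : Bq n p (k + N) = Bq n p k := by
  have hf : pw k (Complex.exp T) ≠ 0 := pw_ne_zero (Complex.exp_ne_zero T)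
  have h2 : n (k + N - 1) = n (k - 1) := by
    rw [show k + (N : ℤ) - 1 = (k - 1) + N by ring]; exact hnper (k - 1)
  unfold Bq
  rw [hnper k, h2]
  refine Finset.sum_congr rfl fun i _ => Finset.sum_congr rfl fun j _ => ?_
  rw [show k + (N : ℤ) - 1 = (k - 1) + N by ring, hper k i, hper (k - 1) j,
    pw_per hN, pw_per hN, pw_mul, pw_mul]
  set u := pw k (p k i)
  set v := pw k (p (k - 1) j)
  set f := pw k (Complex.exp T)
  set c := (n k : ℂ) * (n (k - 1) : ℂ)
  rw [show u * f - v * f = (u - v) * f by ring,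
    show c * ((u - v) * f) = c * (u - v) * f by ring,
    mul_div_mul_right _ _ hf]

lemma neg_one_sum_Icc : ∀ m : ℕ, ∑ k ∈ Icc (1 : ℤ) (2 * (m : ℤ)), (-1 : ℂ) ^ k = 0 := by
  intro m
  induction m with
  | zero => simp
  | succ m ih =>
    have e : Icc (1 : ℤ) (2 * ((m : ℤ) + 1))
        = insert (2 * (m : ℤ) + 2) (insert (2 * (m : ℤ) + 1) (Icc 1 (2 * (m : ℤ)))) := by
      ext x; simp only [Finset.mem_Icc, Finset.mem_insert]; omega
    push_cast
    rw [e, Finset.sum_insert (by simp only [Finset.mem_Icc, Finset.mem_insert]; omega),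
      Finset.sum_insert (by simp only [Finset.mem_Icc]; omega), ih]
    have h1 : (-1 : ℂ) ^ (2 * (m : ℤ) + 2) = 1 :=
      Even.neg_one_zpow ⟨(m : ℤ) + 1, by ring⟩
    have h2 : (-1 : ℂ) ^ (2 * (m : ℤ) + 1) = -1 :=
      Odd.neg_one_zpow ⟨(m : ℤ), by ring⟩
    rw [h1, h2]; ring

theorem total_force_zero (N : ℕ) (hN : Even N) (hNpos : 0 < N)
    (n : ℤ → ℕ) (hnpos : ∀ k, 0 < n k) (hnper : ∀ k, n (k + N) = n k)
    (T : ℂ) (p : ℤ → ℕ → ℂ)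
    (hper : ∀ k i, p (k + N) i = p k i * Complex.exp T)
    (hne : ∀ k i, i < n k → p k i ≠ 0)
    (hdist : ∀ k i j, i < n k → j < n k → i ≠ j → p k i ≠ p k j)
    (hadj : ∀ k i j, i < n k → j < n (k + 1) →
      pw k (p (k + 1) j) ≠ pw k (p k i))
    (hadj' : ∀ k i j, i < n k → j < n (k - 1) →
      pw k (p k i) ≠ pw k (p (k - 1) j)) :
    ∑ k ∈ Finset.Icc (1 : ℤ) (N : ℤ), ∑ i ∈ range (n k), force n p k i = 0 := by
  have hne1 : (-1 : ℂ) ≠ 0 := by norm_num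
  have hrow : ∀ k : ℤ, ∑ i ∈ range (n k), force n p k i
      = (-1 : ℂ) ^ k * (Aq n p k - Bq n p k) := by
    intro k
    unfold force
    rw [Finset.sum_add_distrib, intra_zero (n k) (p k), zero_add, ← Finset.mul_sum,
      Finset.sum_sub_distrib]
    rfl
  have hkey : ∀ k : ℤ, (-1 : ℂ) ^ k * Aq n p k - (-1 : ℂ) ^ (k + 1) * Bq n p (k + 1)
      = (-1 : ℂ) ^ k := by
    intro k
    rw [Bq_succ n p hnpos hne hadj k, zpow_add_one₀ hne1]
    ring
  have hNge : (1 : ℤ) ≤ (N : ℤ) := by exact_mod_cast hNpos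
  have hmap : Icc (1 : ℤ) (N : ℤ) = Finset.map (addRightEmbedding 1) (Icc 0 ((N : ℤ) - 1)) := by
    rw [map_add_right_Icc]; norm_num
  have e1 : Icc (0 : ℤ) ((N : ℤ) - 1) = insert 0 (Icc 1 ((N : ℤ) - 1)) := by
    ext x; simp only [Finset.mem_Icc, Finset.mem_insert]; omega
  have e2 : Icc (1 : ℤ) (N : ℤ) = insert (N : ℤ) (Icc 1 ((N : ℤ) - 1)) := by
    ext x; simp only [Finset.mem_Icc, Finset.mem_insert]; omega
  have hpowN : (-1 : ℂ) ^ ((N : ℕ) : ℤ) = 1 := by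
    rw [zpow_natCast]; exact Even.neg_one_pow hN
  have hend : (-1 : ℂ) ^ ((0 : ℤ) + 1) * Bq n p (0 + 1)
      = (-1 : ℂ) ^ ((N : ℤ) + 1) * Bq n p ((N : ℤ) + 1) := by
    have hBper : Bq n p ((N : ℤ) + 1) = Bq n p 1 := by
      rw [show (N : ℤ) + 1 = 1 + (N : ℤ) by ring]
      exact Bq_per hN n hnper T p hper 1
    have hpow : (-1 : ℂ) ^ ((N : ℤ) + 1) = -1 := by
      rw [zpow_add_one₀ hne1, hpowN, one_mul]
    rw [hBper, hpow]
    norm_num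
  have hB : ∑ k ∈ Icc (1 : ℤ) (N : ℤ), (-1 : ℂ) ^ k * Bq n p k
      = ∑ k ∈ Icc (1 : ℤ) (N : ℤ), (-1 : ℂ) ^ (k + 1) * Bq n p (k + 1) := by
    nth_rewrite 1 [hmap]
    rw [Finset.sum_map]
    simp only [addRightEmbedding_apply]
    rw [e1, e2, Finset.sum_insert (by simp only [Finset.mem_Icc]; omega),
      Finset.sum_insert (by simp only [Finset.mem_Icc]; omega)]
    rw [hend]
  calc ∑ k ∈ Finset.Icc (1 : ℤ) (N : ℤ), ∑ i ∈ range (n k), force n p k i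
      = ∑ k ∈ Icc (1 : ℤ) (N : ℤ),
          ((-1 : ℂ) ^ k * Aq n p k - (-1 : ℂ) ^ k * Bq n p k) := by
        refine Finset.sum_congr rfl fun k _ => ?_
        rw [hrow k, mul_sub]
    _ = (∑ k ∈ Icc (1 : ℤ) (N : ℤ), (-1 : ℂ) ^ k * Aq n p k)
        - ∑ k ∈ Icc (1 : ℤ) (N : ℤ), (-1 : ℂ) ^ k * Bq n p k := Finset.sum_sub_distrib _ _
    _ = (∑ k ∈ Icc (1 : ℤ) (N : ℤ), (-1 : ℂ) ^ k * Aq n p k)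
        - ∑ k ∈ Icc (1 : ℤ) (N : ℤ), (-1 : ℂ) ^ (k + 1) * Bq n p (k + 1) := by rw [hB]
    _ = ∑ k ∈ Icc (1 : ℤ) (N : ℤ),
          ((-1 : ℂ) ^ k * Aq n p k - (-1 : ℂ) ^ (k + 1) * Bq n p (k + 1)) :=
        (Finset.sum_sub_distrib _ _).symm
    _ = ∑ k ∈ Icc (1 : ℤ) (N : ℤ), (-1 : ℂ) ^ k :=
        Finset.sum_congr rfl fun k _ => hkey k
    _ = 0 := by
        obtain ⟨m, hm⟩ := hN
        rw [show ((N : ℕ) : ℤ) = 2 * (m : ℤ) by rw [hm]; push_cast; ring]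
        exact neg_one_sum_Icc m
end

section
/- All roots of the polynomial p_n(z) = Σ_{k=0}^n (n choose k)^2 z^k are real and negative. -/
open Polynomial Finset Nat

noncomputable def Qp (n : ℕ) : ℝ[X] :=
  ∑ k ∈ range (n + 1), C ((n.choose k : ℝ) ^ 2) * (X ^ k * (X + 1) ^ (n - k))

lemma iter_deriv_add_one_pow (n k : ℕ) :
    derivative^[k] ((X + 1) ^ n : ℝ[X]) =
      C (n.descFactorial k : ℝ) * (X + 1) ^ (n - k) := by
  induction k with
  | zero => simp
  | succ k ih =>
    rw [Function.iterate_succ_apply', ih, derivative_mul, derivative_C, zero_mul, zero_add,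
      derivative_pow, Nat.descFactorial_succ]
    simp only [derivative_add, derivative_X, derivative_one, add_zero, mul_one, Nat.sub_sub,
      Nat.cast_mul, C_mul]
    ring_nf

lemma fact_choose_sq (n k : ℕ) (hk : k ≤ n) :
    n.choose k * (n.descFactorial (n - k) * n.descFactorial k) = n ! * n.choose k ^ 2 := by
  rw [Nat.descFactorial_eq_factorial_mul_choose, Nat.descFactorial_eq_factorial_mul_choose,
    Nat.choose_symm hk]
  have h := Nat.choose_mul_factorial_mul_factorial hk
  calc n.choose k * ((n - k)! * n.choose k * (k ! * n.choose k))
      = n.choose k * k ! * (n - k)! * n.choose k ^ 2 := by ring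
    _ = n ! * n.choose k ^ 2 := by rw [h]

lemma key_deriv (n : ℕ) :
    derivative^[n] ((X : ℝ[X]) ^ n * (X + 1) ^ n) = C (n ! : ℝ) * Qp n := by
  rw [iterate_derivative_mul, Qp, mul_sum]
  refine sum_congr rfl fun k hk => ?_
  have hkn : k ≤ n := Nat.lt_succ_iff.mp (mem_range.mp hk)
  rw [iter_deriv_add_one_pow, iterate_derivative_X_pow_eq_C_mul, Nat.sub_sub_self hkn]
  rw [nsmul_eq_mul, ← C_eq_natCast]
  rw [show (C (n.choose k : ℝ) : ℝ[X]) * (C ((n.descFactorial (n - k) : ℝ)) * X ^ k *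
      (C ((n.descFactorial k : ℝ)) * (X + 1) ^ (n - k))) =
      C ((n.choose k : ℝ) * ((n.descFactorial (n - k) : ℝ) * (n.descFactorial k : ℝ))) *
      (X ^ k * (X + 1) ^ (n - k)) by rw [C_mul, C_mul]; ring]
  rw [← Nat.cast_mul, ← Nat.cast_mul, fact_choose_sq n k hkn]
  push_cast
  rw [C_mul]
  ring

lemma card_roots_le_iterate (p : ℝ[X]) (k : ℕ) :
    Multiset.card p.roots ≤ Multiset.card (derivative^[k] p).roots + k := by
  induction k generalizing p with
  | zero => simp
  | succ k ih =>
    calc Multiset.card p.roots ≤ Multiset.card (derivative p).roots + 1 :=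
          p.card_roots_le_derivative
      _ ≤ Multiset.card (derivative^[k] (derivative p)).roots + k + 1 := by
          exact Nat.add_le_add_right (ih (derivative p)) 1
      _ = Multiset.card (derivative^[k + 1] p).roots + (k + 1) := by
          rw [Function.iterate_succ_apply]; ring

lemma Qp_monic_term (n k : ℕ) (hk : k ≤ n) :
    ((X : ℝ[X]) ^ k * (X + 1) ^ (n - k)).Monic ∧
      ((X : ℝ[X]) ^ k * (X + 1) ^ (n - k)).natDegree = n := by
  have h1 : ((X : ℝ[X]) + 1).Monic := by
    simpa using monic_X_add_C (1 : ℝ)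
  have hm : ((X : ℝ[X]) ^ k * (X + 1) ^ (n - k)).Monic :=
    (monic_X_pow k).mul (h1.pow _)
  refine ⟨hm, ?_⟩
  rw [natDegree_mul (monic_X_pow k).ne_zero (h1.pow _).ne_zero, natDegree_X_pow,
    natDegree_pow]
  have : ((X : ℝ[X]) + 1).natDegree = 1 := by simpa using natDegree_X_add_C (1 : ℝ)
  rw [this, mul_one]
  omega

lemma Qp_coeff_n (n : ℕ) : (Qp n).coeff n = ∑ k ∈ range (n + 1), (n.choose k : ℝ) ^ 2 := by
  rw [Qp, finset_sum_coeff]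
  refine sum_congr rfl fun k hk => ?_
  have hk' : k ≤ n := Nat.lt_succ_iff.mp (mem_range.mp hk)
  obtain ⟨hm, hd⟩ := Qp_monic_term n k hk'
  rw [coeff_C_mul]
  have := hm.coeff_natDegree
  rw [hd] at this
  rw [this, mul_one]

lemma Qp_natDegree (n : ℕ) : (Qp n).natDegree = n := by
  have hc : (Qp n).coeff n ≠ 0 := by
    rw [Qp_coeff_n]
    have : (1 : ℝ) ≤ ∑ k ∈ range (n + 1), (n.choose k : ℝ) ^ 2 := by
      have := single_le_sum (f := fun k => (n.choose k : ℝ) ^ 2)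
        (fun i _ => by positivity) (mem_range.mpr (Nat.succ_pos n))
      simpa using this
    linarith
  have h1 : n ≤ (Qp n).natDegree := le_natDegree_of_ne_zero hc
  have h2 : (Qp n).natDegree ≤ n := by
    apply natDegree_sum_le_of_forall_le
    intro k hk
    have hk' : k ≤ n := Nat.lt_succ_iff.mp (mem_range.mp hk)
    obtain ⟨hm, hd⟩ := Qp_monic_term n k hk'
    calc (C ((n.choose k : ℝ) ^ 2) * (X ^ k * (X + 1) ^ (n - k))).natDegree
        ≤ (C ((n.choose k : ℝ) ^ 2)).natDegree + (X ^ k * (X + 1) ^ (n - k) : ℝ[X]).natDegree :=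
          natDegree_mul_le
      _ ≤ n := by rw [natDegree_C, hd, zero_add]
  omega

lemma Qp_ne_zero (n : ℕ) : Qp n ≠ 0 := by
  intro h
  have hc := Qp_coeff_n n
  rw [h, coeff_zero] at hc
  have := single_le_sum (f := fun k => (n.choose k : ℝ) ^ 2)
    (fun i _ => by positivity) (mem_range.mpr (Nat.succ_pos n))
  simp at this
  linarith [hc ▸ this]

lemma Qp_card_roots (n : ℕ) : Multiset.card (Qp n).roots = n := by
  have hfac : (n ! : ℝ) ≠ 0 := by positivity
  have hup : Multiset.card (Qp n).roots ≤ n := by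
    simpa [Qp_natDegree n] using card_roots' (Qp n)
  have hP : ((X : ℝ[X]) ^ n * (X + 1) ^ n) ≠ 0 := by
    apply mul_ne_zero (pow_ne_zero _ X_ne_zero) (pow_ne_zero _ _)
    intro h
    have := congrArg (fun p => Polynomial.eval 0 p) h
    simp at this
  have hroots : Multiset.card ((X : ℝ[X]) ^ n * (X + 1) ^ n).roots = 2 * n := by
    rw [roots_mul hP, roots_X_pow]
    have : ((X : ℝ[X]) + 1) = X - C (-1) := by simp
    rw [this, roots_pow, roots_X_sub_C]
    simp
    ring
  have hlow := card_roots_le_iterate ((X : ℝ[X]) ^ n * (X + 1) ^ n) n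
  rw [hroots, key_deriv, roots_C_mul _ hfac] at hlow
  omega

lemma Qp_splits (n : ℕ) : (Qp n).Splits := by
  rw [splits_iff_card_roots, Qp_card_roots, Qp_natDegree]

lemma pn_real (n : ℕ) (t : ℝ) :
    pn n (t : ℂ) = ((∑ k ∈ range (n + 1), (n.choose k : ℝ) ^ 2 * t ^ k : ℝ) : ℂ) := by
  rw [pn]
  push_cast
  rfl

lemma pn_pos (n : ℕ) (t : ℝ) (ht : 0 ≤ t) : pn n (t : ℂ) ≠ 0 := by
  rw [pn_real]
  have h1 : (1 : ℝ) ≤ ∑ k ∈ range (n + 1), (n.choose k : ℝ) ^ 2 * t ^ k := by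
    have := single_le_sum (f := fun k => (n.choose k : ℝ) ^ 2 * t ^ k)
      (fun i _ => by positivity) (mem_range.mpr (Nat.succ_pos n))
    simpa using this
  intro h
  rw [Complex.ofReal_eq_zero] at h
  linarith

lemma eval_Qp (n : ℕ) (z : ℂ) (hz : z ≠ 1) :
    ((Qp n).map (algebraMap ℝ ℂ)).eval ((z - 1)⁻¹) * (z - 1) ^ n = pn n z := by
  have h1 : z - 1 ≠ 0 := sub_ne_zero.mpr hz
  have hx : (z - 1)⁻¹ * (z - 1) = 1 := inv_mul_cancel₀ h1
  simp only [Qp, Polynomial.map_sum, Polynomial.map_mul, Polynomial.map_pow,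
    Polynomial.map_add, map_C, map_X, Polynomial.map_one, eval_finset_sum, eval_mul,
    eval_pow, eval_add, eval_C, eval_X, eval_one]
  rw [sum_mul]
  have hterm : ∀ k ∈ range (n + 1),
      algebraMap ℝ ℂ ((n.choose k : ℝ) ^ 2) * ((z - 1)⁻¹ ^ k * ((z - 1)⁻¹ + 1) ^ (n - k)) *
        (z - 1) ^ n = ((n.choose k : ℂ)) ^ 2 * z ^ (n - k) := by
    intro k hk
    have hkn : k ≤ n := Nat.lt_succ_iff.mp (mem_range.mp hk)
    have hsplit : (z - 1) ^ n = (z - 1) ^ k * (z - 1) ^ (n - k) := by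
      rw [← pow_add, Nat.add_sub_cancel' hkn]
    have h2 : ((z - 1)⁻¹ + 1) * (z - 1) = z := by
      rw [add_mul, hx, one_mul]; ring
    have hcast : algebraMap ℝ ℂ ((n.choose k : ℝ) ^ 2) = ((n.choose k : ℂ)) ^ 2 := by
      push_cast; rfl
    rw [hcast, hsplit]
    calc ((n.choose k : ℂ)) ^ 2 * ((z - 1)⁻¹ ^ k * ((z - 1)⁻¹ + 1) ^ (n - k)) *
          ((z - 1) ^ k * (z - 1) ^ (n - k))
        = ((n.choose k : ℂ)) ^ 2 * (((z - 1)⁻¹ * (z - 1)) ^ k *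
            (((z - 1)⁻¹ + 1) * (z - 1)) ^ (n - k)) := by
          rw [mul_pow, mul_pow]; ring
      _ = ((n.choose k : ℂ)) ^ 2 * z ^ (n - k) := by rw [hx, h2, one_pow, one_mul]
  rw [sum_congr rfl hterm, pn]
  have := Finset.sum_range_reflect (fun k => ((n.choose k : ℂ)) ^ 2 * z ^ k) (n + 1)
  rw [← this]
  refine sum_congr rfl fun k hk => ?_
  have hkn : k ≤ n := Nat.lt_succ_iff.mp (mem_range.mp hk)
  have h3 : n + 1 - 1 - k = n - k := by omega
  rw [h3, Nat.choose_symm hkn]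

theorem pn_roots_real_negative (n : ℕ) (hn : 1 ≤ n) (z : ℂ) (hz : pn n z = 0) :
    ∃ x : ℝ, x < 0 ∧ z = (x : ℂ) := by
  have hz1 : z ≠ 1 := by
    intro h
    have := pn_pos n 1 zero_le_one
    rw [Complex.ofReal_one, ← h] at this
    exact this hz
  have h1 : z - 1 ≠ 0 := sub_ne_zero.mpr hz1
  have heval : ((Qp n).map (algebraMap ℝ ℂ)).eval ((z - 1)⁻¹) = 0 := by
    have := eval_Qp n z hz1
    rw [hz] at this
    exact (mul_eq_zero.mp this).resolve_right (pow_ne_zero n h1)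
  have hmapne : (Qp n).map (algebraMap ℝ ℂ) ≠ 0 := by
    rw [Polynomial.map_ne_zero_iff (algebraMap ℝ ℂ).injective]
    exact Qp_ne_zero n
  have hmem : (z - 1)⁻¹ ∈ ((Qp n).map (algebraMap ℝ ℂ)).roots :=
    mem_roots'.mpr ⟨hmapne, heval⟩
  rw [(Qp_splits n).roots_map] at hmem
  obtain ⟨r, _, hr⟩ := Multiset.mem_map.mp hmem
  have hr' : (r : ℂ) = (z - 1)⁻¹ := hr
  have hrne : r ≠ 0 := by
    intro h0
    rw [h0, Complex.ofReal_zero] at hr'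
    exact h1 (inv_eq_zero.mp hr'.symm)
  have h2 : z - 1 = ((r : ℂ))⁻¹ := by
    rw [← inv_inv (z - 1), ← hr']
  have hz2 : z = ((1 + r⁻¹ : ℝ) : ℂ) := by
    push_cast
    linear_combination h2
  set t : ℝ := 1 + r⁻¹ with ht
  refine ⟨t, ?_, hz2⟩
  by_contra hge
  push_neg at hge
  exact pn_pos n t hge (hz2 ▸ hz)
end
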